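/- Two voters lying strictly within the same band (the open interval between two consecutive midpoints of pairs of party positions) have identical symmetric single-peaked preference orders over all parties. -/

import Mathlib

lemma ssp_pref_iff (a b v : ℝ) :
    |v - a| < |v - b| ↔ ((a < b ∧ v < (a + b) / 2) ∨ (b < a ∧ (a + b) / 2 < v)) := by
  have h : |v - a| < |v - b| ↔ (v - a) ^ 2 < (v - b) ^ 2 := by
    rw [← sq_abs (v - a), ← sq_abs (v - b)]
    exact (pow_lt_pow_iff_left₀ (abs_nonneg _) (abs_nonneg _) two_ne_zero).symm
  rw [h]
  constructor
  · intro hlt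
    rcases lt_trichotomy a b with hab | hab | hab
    · left; exact ⟨hab, by nlinarith⟩
    · exfalso; subst hab; nlinarith
    · right; exact ⟨hab, by nlinarith⟩
  · rintro (⟨hab, hv⟩ | ⟨hab, hv⟩) <;> nlinarith

/-- Two voters lying strictly within the same band (strictly on
the same side of every divider `(p i + p j)/2`, and on no divider) have
identical symmetric single-peaked preference orders over all parties. -/
theorem ssp_same_band_same_preferences
    {m : ℕ} (p : Fin m → ℝ) (hp : Function.Injective p) (v1 v2 : ℝ)
    (hband : ∀ i j : Fin m,
      v1 ≠ (p i + p j) / 2 ∧ v2 ≠ (p i + p j) / 2 ∧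
        (v1 < (p i + p j) / 2 ↔ v2 < (p i + p j) / 2)) :
    ∀ i j : Fin m, i ≠ j →
      (|v1 - p i| < |v1 - p j| ↔ |v2 - p i| < |v2 - p j|) := by
  intro i j hij
  obtain ⟨h1, h2, h3⟩ := hband i j
  have h4 : (p i + p j) / 2 < v1 ↔ (p i + p j) / 2 < v2 := by
    constructor <;> intro h
    · rcases lt_trichotomy ((p i + p j) / 2) v2 with h' | h' | h'
      · exact h'
      · exact absurd h'.symm h2
      · exact absurd (h3.mpr h') (not_lt.mpr h.le)
    · rcases lt_trichotomy ((p i + p j) / 2) v1 with h' | h' | h'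
      · exact h'
      · exact absurd h'.symm h1
      · exact absurd (h3.mp h') (not_lt.mpr h.le)
  rw [ssp_pref_iff, ssp_pref_iff, h3, h4]
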